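/- Let M > 0 and let y : [0, 2π] → ℝ be continuous with 0 < y(t) ≤ M for all t, y(π) = M, and suppose there exist C > 0 and δ₀ > 0 such that y(t) ≥ M − C(t − π)² whenever |t − π| ≤ δ₀. Let a > 0 and b ∈ ℝ satisfy aM + b < 0. Then there exists a unique ω̂ ∈ (√M, ∞) such that 1 + (a ω̂² + b) · (1/2π) ∫₀^{2π} y(t)/(ω̂² − y(t)) dt = 0. Moreover, the function ω ↦ a ω² + b + 2π / ∫₀^{2π} y(t)/(ω² − y(t)) dt is strictly increasing on (√M, ∞), so this root is simple. -/

import Mathlib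

open Real MeasureTheory

set_option maxHeartbeats 1000000 in
/-- Analytic core of Theorem 3.1: with `M > 0`, `y` continuous, `0 < y ≤ M`,
`y(π) = M` with nondegenerate quadratic behaviour at `π`, and `a > 0`, `b ∈ ℝ`
with `aM + b < 0`, there exists a unique `ωhat ∈ (√M, ∞)` such that
`1 + (a ωhat² + b) · (1/2π) ∫₀^{2π} y(t)/(ωhat² − y(t)) dt = 0`. Moreover
`ω ↦ a ω² + b + 2π / ∫₀^{2π} y(t)/(ω² − y(t)) dt` is strictly increasing
on `(√M, ∞)`. -/
theorem defect_frequency_exists_unique (M : ℝ) (hM : 0 < M) (y : ℝ → ℝ)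
    (hy_cont : ContinuousOn y (Set.Icc 0 (2 * π)))
    (hy_pos : ∀ t ∈ Set.Icc 0 (2 * π), 0 < y t)
    (hy_le : ∀ t ∈ Set.Icc 0 (2 * π), y t ≤ M)
    (hy_max : y π = M)
    (C δ₀ : ℝ) (hC : 0 < C) (hδ₀ : 0 < δ₀)
    (hy_quad : ∀ t ∈ Set.Icc 0 (2 * π), |t - π| ≤ δ₀ → M - C * (t - π) ^ 2 ≤ y t)
    (a b : ℝ) (ha : 0 < a) (hab : a * M + b < 0) :
    (∃! ωhat : ℝ, ωhat ∈ Set.Ioi (Real.sqrt M) ∧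
      1 + (a * ωhat ^ 2 + b) *
        ((1 / (2 * π)) * ∫ t in (0:ℝ)..(2 * π), y t / (ωhat ^ 2 - y t)) = 0) ∧
    StrictMonoOn
      (fun ω => a * ω ^ 2 + b + 2 * π / ∫ t in (0:ℝ)..(2 * π), y t / (ω ^ 2 - y t))
      (Set.Ioi (Real.sqrt M)) := by
  have hπ : (0:ℝ) < π := Real.pi_pos
  have h2π : (0:ℝ) < 2 * π := by linarith
  set s := Real.sqrt M with hs_def
  clear_value s
  have hs_pos : 0 < s := by rw [hs_def]; exact Real.sqrt_pos.mpr hM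
  have hs_sq : s ^ 2 = M := by rw [hs_def]; exact Real.sq_sqrt hM.le
  set I : ℝ → ℝ := fun ω => ∫ t in (0:ℝ)..(2*π), y t / (ω^2 - y t) with hI_def
  set F : ℝ → ℝ := fun ω => a * ω ^ 2 + b + 2 * π / I ω with hF_def
  -- denominator positivity
  have hden : ∀ ω, s < ω → ∀ t ∈ Set.Icc (0:ℝ) (2*π), 0 < ω^2 - y t := by
    intro ω hω t ht
    have h1 : s^2 < ω^2 := pow_lt_pow_left₀ hω hs_pos.le two_ne_zero
    have := hy_le t ht
    linarith
  have hcont : ∀ ω, s < ω → ContinuousOn (fun t => y t / (ω^2 - y t)) (Set.Icc 0 (2*π)) := by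
    intro ω hω
    exact hy_cont.div (continuousOn_const.sub hy_cont) (fun t ht => (hden ω hω t ht).ne')
  have hint : ∀ ω, s < ω → IntervalIntegrable (fun t => y t / (ω^2 - y t)) volume 0 (2*π) := by
    intro ω hω
    exact (hcont ω hω).intervalIntegrable_of_Icc h2π.le
  have hIpos : ∀ ω, s < ω → 0 < I ω := by
    intro ω hω
    refine intervalIntegral.intervalIntegral_pos_of_pos_on (hint ω hω) (fun t ht => ?_) h2π
    have ht' : t ∈ Set.Icc (0:ℝ) (2*π) := Set.Ioo_subset_Icc_self ht
    exact div_pos (hy_pos t ht') (hden ω hω t ht')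
  have hImono : ∀ ω₁ ω₂, s < ω₁ → ω₁ ≤ ω₂ → I ω₂ ≤ I ω₁ := by
    intro ω₁ ω₂ h1 h12
    refine intervalIntegral.integral_mono_on h2π.le
      (hint ω₂ (lt_of_lt_of_le h1 h12)) (hint ω₁ h1) (fun t ht => ?_)
    have hyt := (hy_pos t ht).le
    have d1 := hden ω₁ h1 t ht
    have hsq : ω₁^2 ≤ ω₂^2 := pow_le_pow_left₀ (hs_pos.trans h1).le h12 2
    exact div_le_div_of_nonneg_left hyt d1 (by linarith)
  -- strict monotonicity of F
  have hFmono : StrictMonoOn F (Set.Ioi s) := by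
    intro ω₁ h1 ω₂ h2 h12
    simp only [hF_def]
    have h1' : s < ω₁ := h1
    have h2' : s < ω₂ := h2
    have hp : ω₁^2 < ω₂^2 := pow_lt_pow_left₀ h12 (hs_pos.trans h1').le two_ne_zero
    have hq : a * ω₁^2 < a * ω₂^2 := by
      exact mul_lt_mul_of_pos_left hp ha
    have hIle := hImono ω₁ ω₂ h1' h12.le
    have hI2 := hIpos ω₂ h2'
    have hdiv : 2*π / I ω₁ ≤ 2*π / I ω₂ :=
      div_le_div_of_nonneg_left h2π.le hI2 hIle
    linarith
  -- continuity of I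
  have hIcontAt : ∀ ω₀, s < ω₀ → ContinuousAt I ω₀ := by
    intro ω₀ hω₀
    set r := (s + ω₀)/2 with hr_def
    clear_value r
    have hr1 : s < r := by rw [hr_def]; linarith
    have hr2 : r < ω₀ := by rw [hr_def]; linarith
    have hrM : M < r^2 := by nlinarith
    have hmem : Set.Ioi r ∈ nhds ω₀ := Ioi_mem_nhds hr2
    have hIoc : Set.uIoc (0:ℝ) (2*π) = Set.Ioc 0 (2*π) := Set.uIoc_of_le h2π.le
    rw [hI_def]
    apply intervalIntegral.continuousAt_of_dominated_interval
      (bound := fun _ => M / (r^2 - M))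
    · filter_upwards [hmem] with ω hω
      refine (((hcont ω (hr1.trans hω)).mono ?_).aestronglyMeasurable measurableSet_uIoc)
      rw [hIoc]; exact Set.Ioc_subset_Icc_self
    · filter_upwards [hmem] with ω hω
      refine Filter.Eventually.of_forall (fun t ht => ?_)
      rw [hIoc] at ht
      have ht' : t ∈ Set.Icc (0:ℝ) (2*π) := Set.Ioc_subset_Icc_self ht
      have hd : 0 < ω^2 - y t := hden ω (hr1.trans hω) t ht'
      have hωr : r < ω := hω
      have hd2 : r^2 - M ≤ ω^2 - y t := by
        have h5 := pow_lt_pow_left₀ hωr (hs_pos.trans hr1).le (two_ne_zero)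
        have := hy_le t ht'
        linarith
      rw [Real.norm_eq_abs, abs_of_nonneg (div_nonneg (hy_pos t ht').le hd.le)]
      exact div_le_div₀ hM.le (hy_le t ht') (by linarith) hd2
    · exact intervalIntegrable_const
    · refine Filter.Eventually.of_forall (fun t ht => ?_)
      rw [hIoc] at ht
      have ht' : t ∈ Set.Icc (0:ℝ) (2*π) := Set.Ioc_subset_Icc_self ht
      have hd : 0 < ω₀^2 - y t := hden ω₀ hω₀ t ht'
      exact continuousAt_const.div
        (((continuous_pow 2).sub continuous_const).continuousAt) hd.ne'
  -- continuity of F on compact subintervals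
  have hFcont : ∀ ω₁ ω₂ : ℝ, s < ω₁ → ContinuousOn F (Set.Icc ω₁ ω₂) := by
    intro ω₁ ω₂ h1
    intro x hx
    have hx' : s < x := lt_of_lt_of_le h1 hx.1
    have hca : ContinuousAt F x := by
      rw [hF_def]
      exact (((continuous_const.mul (continuous_pow 2)).add continuous_const).continuousAt).add
        (continuousAt_const.div (hIcontAt x hx') (hIpos x hx').ne')
    exact hca.continuousWithinAt
  -- the small endpoint ω₁ where F < 0
  have hK : 0 < -(a*M+b) := by linarith
  set K := 8*π / (-(a*M+b)) with hK_def
  clear_value K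
  have hKpos : 0 < K := by rw [hK_def]; exact div_pos (by positivity) hK
  set δ₁ := min δ₀ (min (Real.sqrt (M/(2*C))) π) with hδ₁_def
  clear_value δ₁
  have hδ₁pos : 0 < δ₁ := by
    rw [hδ₁_def]; exact lt_min hδ₀ (lt_min (Real.sqrt_pos.mpr (by positivity)) hπ)
  have hδ₁le₀ : δ₁ ≤ δ₀ := by rw [hδ₁_def]; exact min_le_left _ _
  have hδ₁leπ : δ₁ ≤ π := by
    rw [hδ₁_def]; exact (min_le_right _ _).trans (min_le_right _ _)
  have hδ₁sq : C * δ₁^2 ≤ M/2 := by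
    have h1 : δ₁ ≤ Real.sqrt (M/(2*C)) := by
      rw [hδ₁_def]; exact (min_le_right _ _).trans (min_le_left _ _)
    have h2 : δ₁^2 ≤ M/(2*C) := by
      have h3 := Real.sq_sqrt (show (0:ℝ) ≤ M/(2*C) by positivity)
      have h4 := pow_le_pow_left₀ hδ₁pos.le h1 2
      linarith
    have : C * δ₁^2 ≤ C * (M/(2*C)) := mul_le_mul_of_nonneg_left h2 hC.le
    calc C * δ₁^2 ≤ C * (M/(2*C)) := this
      _ = M/2 := by field_simp
  set c := Real.sqrt C with hc_def
  clear_value c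
  have hcpos : 0 < c := by rw [hc_def]; exact Real.sqrt_pos.mpr hC
  have hc_sq : c^2 = C := by rw [hc_def]; exact Real.sq_sqrt hC.le
  set ε := min (C*δ₁^2) (min ((-(a*M+b))/(2*a)) ((M/(2*c*K))^2)) with hε_def
  clear_value ε
  have hεpos : 0 < ε := by
    rw [hε_def]
    refine lt_min (by positivity) (lt_min (by positivity) (pow_pos ?_ 2))
    exact div_pos hM (by positivity)
  have hε1 : ε ≤ C*δ₁^2 := by rw [hε_def]; exact min_le_left _ _
  have hε2 : ε ≤ (-(a*M+b))/(2*a) := by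
    rw [hε_def]; exact (min_le_right _ _).trans (min_le_left _ _)
  have hε3 : ε ≤ (M/(2*c*K))^2 := by
    rw [hε_def]; exact (min_le_right _ _).trans (min_le_right _ _)
  have hεM : ε ≤ M/2 := hε1.trans hδ₁sq
  set u := Real.sqrt ε with hu_def
  clear_value u
  have hupos : 0 < u := by rw [hu_def]; exact Real.sqrt_pos.mpr hεpos
  have hu_sq : u^2 = ε := by rw [hu_def]; exact Real.sq_sqrt hεpos.le
  have huK : 2*c*K*u ≤ M := by
    have h1 : u ≤ M/(2*c*K) := by
      rw [hu_def]
      calc Real.sqrt ε ≤ Real.sqrt ((M/(2*c*K))^2) := Real.sqrt_le_sqrt hε3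
        _ = M/(2*c*K) := Real.sqrt_sq (by positivity)
    have h2 : u * (2*c*K) ≤ M :=
      (le_div_iff₀ (by positivity)).mp h1
    calc 2*c*K*u = u * (2*c*K) := by ring
      _ ≤ M := h2
  set ρ := u / c with hρ_def
  clear_value ρ
  have hρpos : 0 < ρ := by rw [hρ_def]; positivity
  have hCρ : C * ρ^2 = ε := by
    rw [hρ_def, div_pow, hu_sq, ← hc_sq]; field_simp
  have hρδ : ρ ≤ δ₁ := by
    have h1 : ρ^2 ≤ δ₁^2 := by
      have h2 : C * ρ^2 ≤ C * δ₁^2 := by rw [hCρ]; exact hε1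
      exact le_of_mul_le_mul_left h2 hC
    have h2 := Real.sqrt_le_sqrt h1
    rwa [Real.sqrt_sq hρpos.le, Real.sqrt_sq hδ₁pos.le] at h2
  set ω₁ := Real.sqrt (M + ε) with hω₁_def
  clear_value ω₁
  have hω₁sq : ω₁^2 = M + ε := by rw [hω₁_def]; exact Real.sq_sqrt (by positivity)
  have hω₁s : s < ω₁ := by
    rw [hω₁_def, hs_def]
    exact Real.sqrt_lt_sqrt hM.le (by linarith)
  have hω₁pos : 0 < ω₁ := hs_pos.trans hω₁s
  -- lower bound on I ω₁
  have hIlow : K ≤ I ω₁ := by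
    have hsub : Set.Icc (π - ρ) (π + ρ) ⊆ Set.Icc (0:ℝ) (2*π) := by
      intro t ht
      constructor
      · have := ht.1; linarith [hρδ.trans hδ₁leπ]
      · have := ht.2; linarith [hρδ.trans hδ₁leπ]
    have hpt : ∀ t ∈ Set.Icc (π-ρ) (π+ρ), M/(4*ε) ≤ y t / (ω₁^2 - y t) := by
      intro t ht
      have habs : |t - π| ≤ ρ := abs_le.mpr ⟨by linarith [ht.1], by linarith [ht.2]⟩
      have ht' := hsub ht
      have hquad := hy_quad t ht' (habs.trans (hρδ.trans hδ₁le₀))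
      have hsq' : (t-π)^2 ≤ ρ^2 := sq_le_sq' (by linarith [abs_le.mp habs |>.1]) (abs_le.mp habs).2
      have hCsq : C * (t-π)^2 ≤ ε := by
        have := mul_le_mul_of_nonneg_left hsq' hC.le
        linarith [hCρ]
      have hylow : M/2 ≤ y t := by linarith
      have hd : 0 < ω₁^2 - y t := hden ω₁ hω₁s t ht'
      have hdle : ω₁^2 - y t ≤ 2*ε := by rw [hω₁sq]; linarith
      rw [div_le_div_iff₀ (by positivity) hd]
      have hA := mul_le_mul_of_nonneg_left hdle hM.le
      have hB := mul_le_mul_of_nonneg_left hylow (by positivity : (0:ℝ) ≤ 4*ε)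
      linarith
    have h1 : (∫ t in (π-ρ)..(π+ρ), y t / (ω₁^2 - y t)) ≤ I ω₁ := by
      rw [hI_def]
      refine intervalIntegral.integral_mono_interval
        (by linarith [hρδ.trans hδ₁leπ]) (by linarith) (by linarith [hρδ.trans hδ₁leπ]) ?_
        (hint ω₁ hω₁s)
      rw [Filter.EventuallyLE, ae_restrict_iff' measurableSet_Ioc]
      refine Filter.Eventually.of_forall (fun t ht => ?_)
      have ht' : t ∈ Set.Icc (0:ℝ) (2*π) := Set.Ioc_subset_Icc_self ht
      exact div_nonneg (hy_pos t ht').le (hden ω₁ hω₁s t ht').le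
    have h2 : (2*ρ) * (M/(4*ε)) ≤ ∫ t in (π-ρ)..(π+ρ), y t / (ω₁^2 - y t) := by
      have hii : IntervalIntegrable (fun t => y t / (ω₁^2 - y t)) volume (π-ρ) (π+ρ) := by
        refine (hint ω₁ hω₁s).mono_set ?_
        rw [Set.uIcc_of_le (by linarith : π - ρ ≤ π + ρ), Set.uIcc_of_le h2π.le]
        exact hsub
      have := intervalIntegral.integral_mono_on (by linarith : π - ρ ≤ π + ρ)
        intervalIntegrable_const hii hpt
      rw [intervalIntegral.integral_const, smul_eq_mul] at this
      linarith [this]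
    have h3 : K ≤ 2*ρ * (M/(4*ε)) := by
      have heq : 2*ρ * (M/(4*ε)) = M / (2*c*u) := by
        rw [hρ_def, ← hu_sq]; field_simp; ring
      rw [heq, le_div_iff₀ (by positivity)]
      calc K * (2*c*u) = 2*c*K*u := by ring
        _ ≤ M := huK
    linarith
  -- F ω₁ < 0
  have hFω₁ : F ω₁ < 0 := by
    have hq : a * ω₁^2 + b ≤ (a*M+b)/2 := by
      rw [hω₁sq]
      have : a * ε ≤ (-(a*M+b))/2 := by
        have := mul_le_mul_of_nonneg_left hε2 ha.le
        calc a * ε ≤ a * ((-(a*M+b))/(2*a)) := this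
          _ = (-(a*M+b))/2 := by field_simp
      linarith
    have hdiv : 2*π / I ω₁ ≤ 2*π / K :=
      div_le_div_of_nonneg_left h2π.le hKpos hIlow
    have hKval : 2*π / K = (-(a*M+b))/4 := by
      rw [hK_def]; rw [div_div_eq_mul_div]; field_simp [hK.ne']; ring
    rw [hKval] at hdiv
    show a * ω₁ ^ 2 + b + 2 * π / I ω₁ < 0
    linarith
  -- the large endpoint ω₂ where F > 0
  set ω₂ := Real.sqrt ((1 + |b|)/a) + ω₁ with hω₂_def
  clear_value ω₂
  have hsq2pos : (0:ℝ) < (1 + |b|)/a := by positivity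
  have hω₂gt : ω₁ < ω₂ := by
    rw [hω₂_def]
    have := Real.sqrt_pos.mpr hsq2pos
    linarith
  have hω₂s : s < ω₂ := hω₁s.trans hω₂gt
  have hFω₂ : 0 < F ω₂ := by
    have h1 : Real.sqrt ((1 + |b|)/a) ≤ ω₂ := by rw [hω₂_def]; linarith
    have h2 : (1 + |b|)/a ≤ ω₂^2 := by
      have h3 := Real.sq_sqrt hsq2pos.le
      have h5 := pow_le_pow_left₀ (Real.sqrt_nonneg ((1 + |b|)/a)) h1 2
      linarith
    have h4 : 1 + |b| ≤ a * ω₂^2 := by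
      rw [div_le_iff₀ ha] at h2
      linarith [h2]
    have h5 : -b ≤ |b| := neg_le_abs b
    have h6 : 0 < 2*π / I ω₂ := div_pos h2π (hIpos ω₂ hω₂s)
    show 0 < a * ω₂ ^ 2 + b + 2 * π / I ω₂
    linarith
  -- IVT
  obtain ⟨ω₀, hω₀mem, hω₀⟩ :=
    intermediate_value_Icc hω₂gt.le (hFcont ω₁ ω₂ hω₁s) ⟨hFω₁.le, hFω₂.le⟩
  have hω₀s : s < ω₀ := lt_of_lt_of_le hω₁s hω₀mem.1
  -- equation ↔ F = 0
  have hEq : ∀ ω, s < ω →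
      ((1 + (a*ω^2+b) * ((1/(2*π)) * I ω) = 0) ↔ F ω = 0) := by
    intro ω hω
    have hI := hIpos ω hω
    have hfac : (1 + (a*ω^2+b) * ((1/(2*π)) * I ω)) * (2*π / I ω) = F ω := by
      show _ = a * ω ^ 2 + b + 2 * π / I ω
      field_simp
      ring
    constructor
    · intro h; rw [← hfac, h, zero_mul]
    · intro h
      rcases mul_eq_zero.mp (hfac.trans h) with h' | h'
      · exact h'
      · exact absurd h' (div_pos h2π hI).ne'
  constructor
  · refine ⟨ω₀, ⟨hω₀s, ?_⟩, ?_⟩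
    · exact (hEq ω₀ hω₀s).mpr hω₀
    · rintro ω ⟨hωmem, hωeq⟩
      exact hFmono.injOn hωmem (Set.mem_Ioi.mpr hω₀s)
        (((hEq ω hωmem).mp hωeq).trans hω₀.symm)
  · exact hFmono
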